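/- The maximum possible log return of a Bollinger Band long trade is strictly less than the gap at entry between the moving average and the log price ratio. Precisely: let n ≥ 2, x : ℤ → ℝ, and suppose a long trade is entered at t* with x_{t*} < mave_{t*}. Suppose the trade exits at time t′ > t* by an exact crossing of the moving average (x_{t′} = mave_{t′}), and that x_s < mave_{t*} for every s with t′ − n + 1 ≤ s ≤ t′ − 1. Then x_{t′} < mave_{t*}, and hence the log return satisfies x_{t′} − x_{t*} < mave_{t*} − x_{t*}. -/

import Mathlib

/-- The `n`-period moving average of a sequence `x : ℤ → ℝ` at time `t`:
`mave n x t = (1/n) · ∑_{i=0}^{n−1} x (t − i)`. -/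
noncomputable def mave (n : ℕ) (x : ℤ → ℝ) (t : ℤ) : ℝ :=
  (∑ i ∈ Finset.range n, x (t - (i : ℤ))) / n

/-- Lemma 7: the maximum possible log return of a Bollinger Band long trade is
strictly less than the gap at entry between the moving average and the log
price ratio.  If a long trade entered at `t*` (with `x t* < mave t*`) exits at
`t′ > t*` by an exact crossing `x t′ = mave t′`, and all the other values in
the window ending at `t′` lie strictly below `mave t*`, then `x t′ < mave t*`,
so the log return satisfies `x t′ − x t* < mave t* − x t*`. -/
theorem bollinger_return_lt_entry_gap
    (n : ℕ) (hn : 2 ≤ n) (x : ℤ → ℝ) (tstar t' : ℤ)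
    (hentry : x tstar < mave n x tstar)
    (hlt : tstar < t')
    (hexit : x t' = mave n x t')
    (hbelow : ∀ s : ℤ, t' - (n : ℤ) + 1 ≤ s → s ≤ t' - 1 → x s < mave n x tstar) :
    x t' < mave n x tstar ∧ x t' - x tstar < mave n x tstar - x tstar := by

  obtain ⟨m, rfl⟩ : ∃ m, n = m + 1 := ⟨n - 1, by omega⟩
  have hm : 1 ≤ m := by omega
  set M := mave (m+1) x tstar with hM
  have key : x t' < M := by
    have hsum : ∑ i ∈ Finset.range (m+1), x (t' - (i : ℤ)) =
        (∑ i ∈ Finset.range m, x (t' - ((i : ℤ) + 1))) + x t' := by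
      rw [Finset.sum_range_succ']
      simp
    have hterm : ∀ i ∈ Finset.range m, x (t' - ((i : ℤ) + 1)) < M := by
      intro i hi
      simp only [Finset.mem_range] at hi
      exact hbelow _ (by push_cast; omega) (by omega)
    have hsumlt : ∑ i ∈ Finset.range m, x (t' - ((i : ℤ) + 1)) < m * M := by
      calc ∑ i ∈ Finset.range m, x (t' - ((i : ℤ) + 1))
          < ∑ _i ∈ Finset.range m, M := Finset.sum_lt_sum_of_nonempty ⟨0, Finset.mem_range.2 hm⟩ hterm
        _ = m * M := by simp [mul_comm]
    have hex : ((m:ℝ)+1) * x t' = (∑ i ∈ Finset.range m, x (t' - ((i : ℤ) + 1))) + x t' := by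
      have := hexit
      rw [mave] at this
      have hpos : ((m:ℝ)+1) ≠ 0 := by positivity
      field_simp at this
      rw [hsum] at this
      push_cast at this ⊢
      linarith [this]
    have hmpos : (0:ℝ) < m := by exact_mod_cast hm
    nlinarith [hsumlt, hex]
  exact ⟨key, by linarith⟩
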